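/- Let ε ∈ ℝ. For every z ∈ ℂ, there exist w₁, w₂ ∈ ℂ with w₁ ≠ w₂, w₁² − z·w₁ + ε = 0, w₂² − z·w₂ + ε = 0, and Re(w₁) = Re(w₂), if and only if z² is real with Re(z²) < 4ε (i.e., Im(z²) = 0 and Re(z²) < 4ε). (This computes the set B_ε⁺ for the deformed reducible curve f(z,w) = w(w − z) + ε.) -/

import Mathlib

/-- For real `ε` and `z ∈ ℂ`, the quadratic `w² − zw + ε` has two
distinct roots with equal real parts iff `z²` is real with `Re(z²) < 4ε`. -/
theorem statement10 (ε : ℝ) (z : ℂ) :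
    (∃ w₁ w₂ : ℂ, w₁ ≠ w₂ ∧ w₁ ^ 2 - z * w₁ + (ε : ℂ) = 0 ∧ w₂ ^ 2 - z * w₂ + (ε : ℂ) = 0 ∧
      w₁.re = w₂.re) ↔ ((z ^ 2).im = 0 ∧ (z ^ 2).re < 4 * ε) :=
  by
  constructor
  · rintro ⟨w₁, w₂, hne, h1, h2, hre⟩
    have hsum : w₁ + w₂ = z := by
      have h3 : (w₁ - w₂) * (w₁ + w₂ - z) = 0 := by linear_combination h1 - h2
      rcases mul_eq_zero.mp h3 with h | h
      · exact absurd (sub_eq_zero.mp h) hne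
      · exact sub_eq_zero.mp h
    have hprod : (ε : ℂ) = w₁ * w₂ := by linear_combination h1 - w₁ * hsum
    have hkey : z ^ 2 = 4 * (ε : ℂ) + (w₁ - w₂) ^ 2 := by
      linear_combination (-(z + w₁ + w₂)) * hsum - 4 * hprod
    set d : ℝ := w₁.im - w₂.im with hd
    have hdne : d ≠ 0 := by
      intro h
      exact hne (Complex.ext hre (by simpa [hd, sub_eq_zero] using h))
    have hsq : (w₁ - w₂) ^ 2 = -((d ^ 2 : ℝ) : ℂ) := by
      have hre0 : (w₁ - w₂).re = 0 := by simp [Complex.sub_re, hre]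
      have him0 : (w₁ - w₂).im = d := by simp [hd]
      apply Complex.ext <;>
        simp [pow_two, Complex.mul_re, Complex.mul_im, hre0, him0]
    rw [hsq] at hkey
    have hre' : (z ^ 2).re = 4 * ε - d ^ 2 := by
      have := congrArg Complex.re hkey; simp [← Complex.ofReal_pow] at this; linarith
    have him' : (z ^ 2).im = 0 := by
      have := congrArg Complex.im hkey; simpa [← Complex.ofReal_pow] using this
    refine ⟨him', ?_⟩
    have hd2 : 0 < d ^ 2 := by positivity
    linarith
  · rintro ⟨him, hlt⟩
    set b : ℝ := Real.sqrt (4 * ε - (z ^ 2).re) with hb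
    have hbpos : 0 < b := Real.sqrt_pos.mpr (by linarith)
    have hb2 : (b : ℂ) ^ 2 = 4 * ε - ((z ^ 2).re : ℂ) := by
      have : b ^ 2 = 4 * ε - (z ^ 2).re := Real.sq_sqrt (by linarith)
      exact_mod_cast this
    have hz : z ^ 2 = ((z ^ 2).re : ℂ) := by
      apply Complex.ext <;> simp [him]
    refine ⟨z/2 + Complex.I * b / 2, z/2 - Complex.I * b / 2, ?_, ?_, ?_, ?_⟩
    · intro h
      have : Complex.I * b = 0 := by linear_combination h
      simp [Complex.I_ne_zero, Complex.ext_iff] at this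
      exact hbpos.ne' this
    · linear_combination (-(1:ℂ)/4) * hz - (1/4) * hb2 + ((b:ℂ)^2/4) * Complex.I_sq
    · linear_combination (-(1:ℂ)/4) * hz - (1/4) * hb2 + ((b:ℂ)^2/4) * Complex.I_sq
    · simp
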